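/- Let (δ_t^x) be the periodic nearest-neighbors branching random walk on ℤ² with offspring distribution 𝒫 = (P_i)_{i≥0}, and let q_n(x) = 1 − p_n(x). For every n ≥ 2, q_n(1,0) ≤ Σ_{i≥0} q_n(0,0)^i P_i. -/

import Mathlib

open scoped ENNReal
open MeasureTheory Filter

namespace BRW

/-- Sites of the lattice `ℤ^d`. -/
abbrev Site (d : ℕ) := Fin d → ℤ

/-- A configuration of particles: finitely many particles, `η z` particles at site `z`. -/
abbrev Config (d : ℕ) := Site d →₀ ℕ

noncomputable instance (d : ℕ) : MeasurableSpace (Config d) := ⊤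
noncomputable instance (d : ℕ) : MeasurableSpace (List (Config d)) := ⊤

instance (d : ℕ) : Inhabited (Config d) := ⟨0⟩

/-- Uniform distribution on a finite set (junk value if the set is empty). -/
noncomputable def unifOn {α : Type*} [Inhabited α] (s : Finset α) : PMF α :=
  if h : s.Nonempty then PMF.uniformOfFinset s h else PMF.pure default

/-- Bernoulli distribution (junk value if `p > 1`). -/
noncomputable def bern (p : ℝ≥0∞) : PMF Bool :=
  if h : p ≤ 1 then PMF.bernoulli p.toNNReal (by simpa using ENNReal.toNNReal_mono ENNReal.one_ne_top h) else PMF.pure true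

/-- Convolution of two `PMF`s on an additive monoid: the law of a sum of independent samples. -/
noncomputable def conv {α : Type*} [AddCommMonoid α] (p q : PMF α) : PMF α :=
  p.bind fun a => q.bind fun b => PMF.pure (a + b)

instance {α : Type*} [AddCommMonoid α] : Std.Commutative (conv (α := α)) where
  comm p q := by
    unfold conv
    rw [PMF.bind_comm]
    refine congrArg _ (funext fun b => congrArg _ (funext fun a => ?_))
    rw [add_comm]

instance {α : Type*} [AddCommMonoid α] : Std.Associative (conv (α := α)) where
  assoc p q r := by
    simp only [conv, PMF.bind_bind, PMF.pure_bind, add_assoc]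

/-- `n`-fold convolution: the law of a sum of `n` independent samples of `p`. -/
noncomputable def iterConv {α : Type*} [AddCommMonoid α] (p : PMF α) : ℕ → PMF α
  | 0 => PMF.pure 0
  | n + 1 => conv p (iterConv p n)

variable {d : ℕ}

/-- The nearest neighbors (`L¹`-distance exactly one) of a site. -/
def nbrs (z : Site d) : Finset (Site d) :=
  (Finset.univ ×ˢ ({1, -1} : Finset ℤ)).image fun p => Function.update z p.1 (z p.1 + p.2)

/-- Law of the configuration of children of one particle at `z`: a random number of offspring
distributed according to `P`, each placed independently and uniformly at random on `nbr z`. -/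
noncomputable def childLaw (P : PMF ℕ) (nbr : Site d → Finset (Site d)) (z : Site d) :
    PMF (Config d) :=
  P.bind fun n => iterConv ((unifOn (nbr z)).map fun w => Finsupp.single w 1) n

/-- Children law of the aperiodic walk: offspring are placed uniformly on the `2d+1` sites at
`L¹`-distance at most `1` from the parent. -/
noncomputable def aperiodicChild (P : PMF ℕ) (z : Site d) : PMF (Config d) :=
  childLaw P (fun w => insert w (nbrs w)) z

/-- Children law of the periodic walk: offspring are placed uniformly on the `2d` nearest
neighbors of the parent. -/
noncomputable def periodicChild (P : PMF ℕ) (z : Site d) : PMF (Config d) :=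
  childLaw P nbrs z

/-- Children law of the `π`-survival periodic walk: offspring placed uniformly on the nearest
neighbors, and in addition the particle itself survives with probability `π`, independently. -/
noncomputable def survChild (P : PMF ℕ) (π : ℝ≥0∞) (z : Site d) : PMF (Config d) :=
  conv (periodicChild P z) ((bern π).map fun b => if b then Finsupp.single z 1 else 0)

/-- One-step transition of a branching random walk with given children law: every particle
produces, independently of all other particles, a random children configuration. -/
noncomputable def stepOf (child : Site d → PMF (Config d)) (η : Config d) : PMF (Config d) :=
  Finset.fold conv (PMF.pure 0) (fun z => iterConv (child z) (η z)) η.support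

/-- One-step transition of the aperiodic nearest-neighbors branching random walk. -/
noncomputable def aperiodicStep (P : PMF ℕ) : Config d → PMF (Config d) :=
  stepOf (aperiodicChild P)

/-- One-step transition of the periodic nearest-neighbors branching random walk. -/
noncomputable def periodicStep (P : PMF ℕ) : Config d → PMF (Config d) :=
  stepOf (periodicChild P)

/-- One-step transition of the `π`-survival periodic nearest-neighbors branching random walk. -/
noncomputable def survStep (P : PMF ℕ) (π : ℝ≥0∞) : Config d → PMF (Config d) :=
  stepOf (survChild P π)

/-- The law of the configuration at time `t` of the Markov chain with one-step transition `step`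
started from configuration `init`. -/
noncomputable def timeLaw (step : Config d → PMF (Config d)) (init : Config d) :
    ℕ → PMF (Config d)
  | 0 => PMF.pure init
  | t + 1 => (timeLaw step init t).bind step

/-- The law of the trajectory up to time `t`, recorded as the list `[η_t, η_{t-1}, ..., η_0]`. -/
noncomputable def pathLaw (step : Config d → PMF (Config d)) (init : Config d) :
    ℕ → PMF (List (Config d))
  | 0 => PMF.pure [init]
  | t + 1 => (pathLaw step init t).bind fun l => (step l.headI).map fun c => c :: l

/-- `z ∈ ∂Λ_n`, the boundary of the hypercube `Λ_n = {z : ‖z‖_∞ ≤ n}`. -/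
def onBdry (n : ℕ) (z : Site d) : Prop :=
  (∀ i, |z i| ≤ (n : ℤ)) ∧ ∃ i, |z i| = (n : ℤ)

/-- `z ∈ Λ̊_n`, the interior of the hypercube `Λ_n`. -/
def inInterior (n : ℕ) (z : Site d) : Prop :=
  ∀ i, |z i| < (n : ℤ)

/-- The configuration `η` has no particle on `∂Λ_n`. -/
def avoids (n : ℕ) (η : Config d) : Prop :=
  ∀ z : Site d, onBdry n z → η z = 0

/-- `ℙ(τ_n > t)`: the probability that the branching random walk with one-step transition `step`
started from `init` puts no particle on `∂Λ_n` at any time `0, 1, ..., t`. -/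
noncomputable def survProb (step : Config d → PMF (Config d)) (init : Config d) (n t : ℕ) :
    ℝ≥0∞ :=
  (pathLaw step init t).toMeasure {l | ∀ c ∈ l, avoids n c}

/-- `p_n = ℙ(τ_n < ∞)`: the probability that some particle ever reaches `∂Λ_n`. -/
noncomputable def hitProb (step : Config d → PMF (Config d)) (init : Config d) (n : ℕ) : ℝ≥0∞ :=
  1 - ⨅ t : ℕ, survProb step init n t

/-- `ℙ(X(z) > k)` when the configuration `X` is distributed according to `p`. -/
noncomputable def tailProb (p : PMF (Config d)) (z : Site d) (k : ℕ) : ℝ≥0∞ :=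
  p.toMeasure {η | k < η z}

/-- The hitting time of `∂Λ_n` by a trajectory of configurations, valued in `ℕ ∪ {∞}`. -/
noncomputable def hitTime (n : ℕ) (f : ℕ → Config d) : ℕ∞ :=
  sInf ((fun t : ℕ => (t : ℕ∞)) '' {t | ¬ avoids n (f t)})

/-- The process `X` on the probability space `(Ω, Pr)` is a realization of (i.e., has the law of)
the branching random walk with one-step transition `step` started from `init`: for every `t`, the
trajectory up to time `t` has law `pathLaw step init t`. -/
def HasPathLaw {Ω : Type*} [MeasurableSpace Ω] (Pr : Measure Ω)
    (step : Config d → PMF (Config d)) (init : Config d) (X : ℕ → Ω → Config d) : Prop :=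
  ∀ t : ℕ, Measure.map (fun ω => (List.range (t + 1)).map fun s => X (t - s) ω) Pr
    = (pathLaw step init t).toMeasure

section Aux
attribute [local instance] Classical.propDecidable

noncomputable instance : CommMonoid (PMF (Config d)) :=
  { mul := conv, one := PMF.pure 0,
    mul_assoc := fun a b c => Std.Associative.assoc (op := conv) a b c,
    mul_comm := fun a b => Std.Commutative.comm (op := conv) a b,
    one_mul := fun p => by
      show conv (PMF.pure 0) p = p
      simp [conv, PMF.pure_bind, PMF.bind_pure],
    mul_one := fun p => by
      show conv p (PMF.pure 0) = p
      simp [conv, PMF.pure_bind, PMF.bind_pure] }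

lemma mul_def (p q : PMF (Config d)) : p * q = conv p q := rfl
lemma one_def : (1 : PMF (Config d)) = PMF.pure 0 := rfl

lemma iterConv_eq_pow (p : PMF (Config d)) : ∀ m, iterConv p m = p ^ m
  | 0 => by rw [pow_zero]; rfl
  | m + 1 => by rw [pow_succ', iterConv, iterConv_eq_pow p m]; rfl

lemma stepOf_eq_prod (child : Site d → PMF (Config d)) (η : Config d) :
    stepOf child η = η.prod fun z m => child z ^ m := by
  rw [stepOf, Finsupp.prod, Finset.prod_eq_fold]
  exact Finset.fold_congr fun z _ => iterConv_eq_pow _ _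

lemma stepOf_add (child : Site d → PMF (Config d)) (η₁ η₂ : Config d) :
    stepOf child (η₁ + η₂) = conv (stepOf child η₁) (stepOf child η₂) := by
  rw [stepOf_eq_prod, stepOf_eq_prod, stepOf_eq_prod, ← mul_def]
  exact Finsupp.prod_add_index' (fun a => pow_zero _) (fun a b₁ b₂ => pow_add _ _ _)

lemma stepOf_single (child : Site d → PMF (Config d)) (y : Site d) :
    stepOf child (Finsupp.single y 1) = child y := by
  rw [stepOf_eq_prod, Finsupp.prod_single_index, pow_one]
  exact pow_zero _

lemma stepOf_zero (child : Site d → PMF (Config d)) :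
    stepOf child (0 : Config d) = PMF.pure 0 := by
  simp [stepOf]

-------------------- pexp --------------------
noncomputable def pexp {α : Type*} (p : PMF α) (F : α → ℝ≥0∞) : ℝ≥0∞ := ∑' a, p a * F a

lemma pexp_pure {α : Type*} (x : α) (F : α → ℝ≥0∞) : pexp (PMF.pure x) F = F x := by
  rw [pexp, tsum_eq_single x]
  · simp
  · intro b hb; simp [PMF.pure_apply, hb]

lemma pexp_bind {α β : Type*} (p : PMF α) (f : α → PMF β) (F : β → ℝ≥0∞) :
    pexp (p.bind f) F = ∑' a, p a * pexp (f a) F := by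
  simp only [pexp, PMF.bind_apply]
  calc ∑' b, (∑' a, p a * f a b) * F b
      = ∑' b, ∑' a, p a * f a b * F b := by
        exact tsum_congr fun b => ENNReal.tsum_mul_right.symm
    _ = ∑' a, ∑' b, p a * (f a b * F b) := by
        rw [ENNReal.tsum_comm]; exact tsum_congr fun a => tsum_congr fun b => mul_assoc _ _ _
    _ = ∑' a, p a * ∑' b, f a b * F b := tsum_congr fun a => ENNReal.tsum_mul_left

lemma pexp_map {α β : Type*} (p : PMF α) (h : α → β) (F : β → ℝ≥0∞) :
    pexp (p.map h) F = pexp p (fun a => F (h a)) := by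
  rw [PMF.map, pexp_bind]
  simp only [Function.comp, pexp_pure]
  rfl

lemma pexp_conv (p q : PMF (Config d)) (F : Config d → ℝ≥0∞) :
    pexp (conv p q) F = pexp p (fun a => pexp q (fun b => F (a + b))) := by
  rw [conv, pexp_bind]
  exact tsum_congr fun a => by rw [pexp_bind]; exact congrArg _ (tsum_congr fun b => by rw [pexp_pure])

lemma pexp_conv_mul (p q : PMF (Config d)) (F : Config d → ℝ≥0∞)
    (hF : ∀ a b, F (a + b) = F a * F b) :
    pexp (conv p q) F = pexp p F * pexp q F := by
  rw [pexp_conv]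
  have : ∀ a, pexp q (fun b => F (a + b)) = F a * pexp q F := by
    intro a
    simp only [pexp, hF]
    rw [← ENNReal.tsum_mul_left]
    exact tsum_congr fun b => by ring
  simp only [this]
  conv_rhs => rw [pexp, ← ENNReal.tsum_mul_right]
  exact tsum_congr fun a => by ring

lemma pexp_pow (q : PMF (Config d)) (F : Config d → ℝ≥0∞)
    (hF : ∀ a b, F (a + b) = F a * F b) (h0 : F 0 = 1) :
    ∀ i : ℕ, pexp (q ^ i) F = (pexp q F) ^ i
  | 0 => by rw [pow_zero, pow_zero, one_def, pexp_pure, h0]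
  | i + 1 => by
      rw [pow_succ', pow_succ', mul_def, pexp_conv_mul _ _ _ hF, pexp_pow q F hF h0 i]

lemma pexp_le_one {α : Type*} (p : PMF α) (F : α → ℝ≥0∞) (hF : ∀ a, F a ≤ 1) :
    pexp p F ≤ 1 := by
  calc ∑' a, p a * F a ≤ ∑' a, p a * 1 :=
        ENNReal.tsum_le_tsum fun a => mul_le_mul_right (hF a) _
    _ = 1 := by simp [PMF.tsum_coe]

lemma toMeasure_eq_pexp {α : Type*} [MeasurableSpace α] (p : PMF α) (s : Set α)
    (hs : MeasurableSet s) :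
    p.toMeasure s = pexp p (fun a => if a ∈ s then 1 else 0) := by
  rw [PMF.toMeasure_apply (p := p) hs, pexp]
  exact tsum_congr fun a => by
    by_cases h : a ∈ s <;> simp [Set.indicator, h]

end Aux

section Aux2
attribute [local instance] Classical.propDecidable
variable {d : ℕ}

lemma bind_congr' {α β : Type*} (p : PMF α) (f g : α → PMF β)
    (h : ∀ a ∈ p.support, f a = g a) : p.bind f = p.bind g := by
  ext b
  simp only [PMF.bind_apply]
  refine tsum_congr fun a => ?_
  by_cases ha : a ∈ p.support
  · rw [h a ha]
  · have : p a = 0 := by simpa [PMF.mem_support_iff] using ha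
    simp [this]

lemma pathLaw_ne_nil (step : Config d → PMF (Config d)) (init : Config d) :
    ∀ t, ∀ l ∈ (pathLaw step init t).support, l ≠ []
  | 0 => by
      intro l hl
      rw [show pathLaw step init 0 = PMF.pure [init] from rfl, PMF.support_pure,
        Set.mem_singleton_iff] at hl
      subst hl; simp
  | t + 1 => by
      intro l hl
      rw [show pathLaw step init (t+1)
          = (pathLaw step init t).bind (fun l => (step l.headI).map fun c => c :: l) from rfl,
        PMF.mem_support_bind_iff] at hl
      obtain ⟨l', _, hmem⟩ := hl
      rw [PMF.mem_support_map_iff] at hmem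
      obtain ⟨c, _, rfl⟩ := hmem
      simp

lemma pathLaw_succ_eq (step : Config d → PMF (Config d)) (init : Config d) :
    ∀ t, pathLaw step init (t + 1)
      = (step init).bind fun c => (pathLaw step c t).map fun l => l ++ [init]
  | 0 => by
      show (PMF.pure [init]).bind (fun l => (step l.headI).map fun c => c :: l)
        = (step init).bind fun c => (PMF.pure [c]).map fun l => l ++ [init]
      rw [PMF.pure_bind]
      rw [PMF.map]
      refine congrArg _ (funext fun c => ?_)
      rw [PMF.pure_map]
      rfl
  | t + 1 => by
      rw [show pathLaw step init (t+2)
          = (pathLaw step init (t+1)).bind (fun l => (step l.headI).map fun c => c :: l) from rfl,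
        pathLaw_succ_eq step init t, PMF.bind_bind]
      refine congrArg _ (funext fun c => ?_)
      rw [show pathLaw step c (t+1)
          = (pathLaw step c t).bind (fun l => (step l.headI).map fun c' => c' :: l) from rfl]
      simp only [PMF.map, PMF.bind_bind, Function.comp, PMF.pure_bind]
      refine bind_congr' _ _ _ fun l hl => ?_
      have hne := pathLaw_ne_nil step c t l hl
      have hh : (l ++ [init]).headI = l.headI := by
        cases l with
        | nil => exact absurd rfl hne
        | cons a l => rfl
      rw [hh]
      refine congrArg _ (funext fun c' => ?_)
      rfl

noncomputable def ind (n : ℕ) (l : List (Config d)) : ℝ≥0∞ :=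
  if (∀ c ∈ l, avoids n c) then 1 else 0

noncomputable def iA (n : ℕ) (η : Config d) : ℝ≥0∞ := if avoids n η then 1 else 0

lemma survProb_eq_pexp (step : Config d → PMF (Config d)) (init : Config d) (n t : ℕ) :
    survProb step init n t = pexp (pathLaw step init t) (ind n) := by
  rw [survProb, toMeasure_eq_pexp _ _ MeasurableSpace.measurableSet_top, pexp, pexp]
  exact tsum_congr fun l => by simp only [ind, Set.mem_setOf_eq]

lemma survProb_zero' (step : Config d → PMF (Config d)) (init : Config d) (n : ℕ) :
    survProb step init n 0 = iA n init := by
  rw [survProb_eq_pexp]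
  rw [show pathLaw step init 0 = PMF.pure [init] from rfl, pexp_pure, ind, iA]
  simp [List.forall_mem_singleton]

lemma ind_append (n : ℕ) (l : List (Config d)) (init : Config d) :
    ind n (l ++ [init]) = iA n init * ind n l := by
  have hiff : (∀ c ∈ l ++ [init], avoids n c) ↔ avoids n init ∧ (∀ c ∈ l, avoids n c) := by
    rw [List.forall_mem_append, List.forall_mem_singleton]; tauto
  rw [ind, ind, iA]
  by_cases h1 : avoids n init
  · by_cases h2 : (∀ c ∈ l, avoids n c)
    · rw [if_pos (hiff.2 ⟨h1, h2⟩), if_pos h1, if_pos h2, one_mul]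
    · rw [if_neg (fun h => h2 (hiff.1 h).2), if_neg h2, mul_zero]
  · rw [if_neg (fun h => h1 (hiff.1 h).1), if_neg h1, zero_mul]

lemma pexp_const_mul {α : Type*} (p : PMF α) (c : ℝ≥0∞) (F : α → ℝ≥0∞) :
    pexp p (fun a => c * F a) = c * pexp p F := by
  rw [pexp, pexp, ← ENNReal.tsum_mul_left]
  exact tsum_congr fun a => by ring

lemma survProb_succ (step : Config d → PMF (Config d)) (init : Config d) (n t : ℕ) :
    survProb step init n (t+1)
      = iA n init * pexp (step init) (fun c => survProb step c n t) := by
  rw [survProb_eq_pexp, pathLaw_succ_eq, pexp_bind]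
  have key : ∀ c, pexp ((pathLaw step c t).map fun l => l ++ [init]) (ind n)
      = iA n init * survProb step c n t := by
    intro c
    rw [pexp_map, survProb_eq_pexp]
    simp only [ind_append]
    exact pexp_const_mul _ _ _
  simp only [key]
  rw [pexp, ← ENNReal.tsum_mul_left]
  exact tsum_congr fun c => by ring

lemma survProb_le_one (step : Config d → PMF (Config d)) (init : Config d) (n t : ℕ) :
    survProb step init n t ≤ 1 := by
  rw [survProb]; exact prob_le_one

lemma iA_add (n : ℕ) (η₁ η₂ : Config d) : iA n (η₁ + η₂) = iA n η₁ * iA n η₂ := by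
  have hiff : avoids n (η₁ + η₂) ↔ avoids n η₁ ∧ avoids n η₂ := by
    constructor
    · intro h
      constructor <;> intro z hz <;> have h' := h z hz <;>
        rw [Finsupp.add_apply] at h' <;> omega
    · rintro ⟨h1, h2⟩ z hz
      rw [Finsupp.add_apply, h1 z hz, h2 z hz]
  rw [iA, iA, iA]
  by_cases h1 : avoids n η₁ <;> by_cases h2 : avoids n η₂ <;> simp [hiff, h1, h2]

lemma survProb_mul (child : Site d → PMF (Config d)) (n : ℕ) :
    ∀ t (η₁ η₂ : Config d), survProb (stepOf child) (η₁ + η₂) n t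
      = survProb (stepOf child) η₁ n t * survProb (stepOf child) η₂ n t
  | 0, η₁, η₂ => by rw [survProb_zero', survProb_zero', survProb_zero', iA_add]
  | t + 1, η₁, η₂ => by
      rw [survProb_succ, survProb_succ, survProb_succ, iA_add, stepOf_add,
        pexp_conv_mul _ _ _ (fun a b => survProb_mul child n t a b)]
      ring

lemma survProb_zero_config (child : Site d → PMF (Config d)) (n : ℕ) :
    ∀ t, survProb (stepOf child) (0 : Config d) n t = 1
  | 0 => by
      rw [survProb_zero']
      simp [iA, avoids]
  | t + 1 => by
      rw [survProb_succ, stepOf_zero, pexp_pure, survProb_zero_config child n t]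
      simp [iA, avoids]

lemma pexp_unifOn {α : Type*} [Inhabited α] (s : Finset α) (hs : s.Nonempty) (F : α → ℝ≥0∞) :
    pexp (unifOn s) F = (s.card : ℝ≥0∞)⁻¹ * ∑ w ∈ s, F w := by
  rw [unifOn, dif_pos hs, pexp, tsum_eq_sum (s := s)
    (fun b hb => by rw [PMF.uniformOfFinset_apply, if_neg hb, zero_mul])]
  rw [Finset.mul_sum]
  exact Finset.sum_congr rfl fun w hw => by rw [PMF.uniformOfFinset_apply, if_pos hw]

noncomputable def uu (P : PMF ℕ) (nn : ℕ) (t : ℕ) (y : Site d) : ℝ≥0∞ :=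
  survProb (periodicStep P) (Finsupp.single y 1) nn t

lemma avoids_single (n : ℕ) (y : Site d) : avoids n (Finsupp.single y 1) ↔ ¬ onBdry n y := by
  constructor
  · intro h hy
    have := h y hy
    simp [Finsupp.single_apply] at this
  · intro hy z hz
    rw [Finsupp.single_apply, if_neg]
    exact fun h => hy (h ▸ hz)

lemma uu_zero (P : PMF ℕ) (nn : ℕ) (y : Site d) :
    uu P nn 0 y = if onBdry nn y then 0 else 1 := by
  rw [uu, survProb_zero', iA]
  by_cases h : onBdry nn y <;> simp [avoids_single, h]

lemma uu_succ (P : PMF ℕ) (nn t : ℕ) (y : Site d) (hne : (nbrs y).Nonempty) :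
    uu P nn (t+1) y = (if onBdry nn y then 0 else 1) *
      ∑' i, P i * ((((nbrs y).card : ℕ) : ℝ≥0∞)⁻¹ * ∑ w ∈ nbrs y, uu P nn t w) ^ i := by
  rw [uu, survProb_succ, periodicStep, stepOf_single]
  congr 1
  · rw [iA]; by_cases h : onBdry nn y <;> simp [avoids_single, h]
  · rw [periodicChild, childLaw, pexp_bind]
    refine tsum_congr fun i => ?_
    congr 1
    rw [iterConv_eq_pow, pexp_pow _ _ (fun a b => survProb_mul _ nn t a b)
      (survProb_zero_config _ nn t)]
    congr 1
    rw [pexp_map, pexp_unifOn _ hne]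
    rfl

end Aux2

section Aux3
attribute [local instance] Classical.propDecidable

def v2 (a b : ℤ) : Site 2 := ![a, b]

lemma v2_inj {a b a' b' : ℤ} (h : v2 a b = v2 a' b') : a = a' ∧ b = b' :=
  ⟨congrFun h 0, congrFun h 1⟩

lemma update_v2_zero (a b x : ℤ) : Function.update (v2 a b) 0 x = v2 x b := by
  funext i
  fin_cases i <;> simp [Function.update_apply, v2]

lemma update_v2_one (a b x : ℤ) : Function.update (v2 a b) 1 x = v2 a x := by
  funext i
  fin_cases i <;> simp [Function.update_apply, v2]

lemma nbrs_v2 (a b : ℤ) :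
    nbrs (v2 a b) = {v2 (a+1) b, v2 (a-1) b, v2 a (b+1), v2 a (b-1)} := by
  rw [nbrs]
  rw [show (Finset.univ ×ˢ ({1, -1} : Finset ℤ) : Finset (Fin 2 × ℤ))
      = {(0,1),(0,-1),(1,1),(1,-1)} from by decide]
  rw [show ({(0,1),(0,-1),(1,1),(1,-1)} : Finset (Fin 2 × ℤ))
      = insert (0,1) (insert (0,-1) (insert (1,1) {(1,-1)})) from rfl]
  rw [Finset.image_insert, Finset.image_insert, Finset.image_insert, Finset.image_singleton]
  show insert (Function.update (v2 a b) 0 (v2 a b 0 + 1)) _ = _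
  rw [show v2 a b 0 = a from rfl, show v2 a b 1 = b from rfl,
    update_v2_zero, update_v2_zero, update_v2_one, update_v2_one]
  rw [show a + -1 = a - 1 from by ring, show b + -1 = b - 1 from by ring]

lemma nbrs_v2_distinct (a b : ℤ) :
    (v2 (a+1) b ≠ v2 (a-1) b) ∧ (v2 (a+1) b ≠ v2 a (b+1)) ∧ (v2 (a+1) b ≠ v2 a (b-1)) ∧
    (v2 (a-1) b ≠ v2 a (b+1)) ∧ (v2 (a-1) b ≠ v2 a (b-1)) ∧ (v2 a (b+1) ≠ v2 a (b-1)) := by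
  refine ⟨fun h => ?_, fun h => ?_, fun h => ?_, fun h => ?_, fun h => ?_, fun h => ?_⟩ <;>
    obtain ⟨h1, h2⟩ := v2_inj h <;> omega

lemma sum4 (a b : ℤ) (f : Site 2 → ℝ≥0∞) :
    ∑ w ∈ nbrs (v2 a b), f w
      = f (v2 (a+1) b) + f (v2 (a-1) b) + f (v2 a (b+1)) + f (v2 a (b-1)) := by
  obtain ⟨h1, h2, h3, h4, h5, h6⟩ := nbrs_v2_distinct a b
  rw [nbrs_v2]
  rw [Finset.sum_insert (by simp [Finset.mem_insert, h1, h2, h3]),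
    Finset.sum_insert (by simp [Finset.mem_insert, h4, h5]),
    Finset.sum_insert (by simp [h6]), Finset.sum_singleton]
  ring

lemma card_nbrs (a b : ℤ) : (nbrs (v2 a b)).card = 4 := by
  obtain ⟨h1, h2, h3, h4, h5, h6⟩ := nbrs_v2_distinct a b
  rw [nbrs_v2]
  rw [Finset.card_insert_of_notMem (by simp [Finset.mem_insert, h1, h2, h3]),
    Finset.card_insert_of_notMem (by simp [Finset.mem_insert, h4, h5]),
    Finset.card_insert_of_notMem (by simp [h6]), Finset.card_singleton]

lemma nbrs_nonempty (a b : ℤ) : (nbrs (v2 a b)).Nonempty := by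
  rw [nbrs_v2]; exact ⟨_, Finset.mem_insert_self _ _⟩

lemma onBdry_v2 (n : ℕ) (a b : ℤ) : onBdry n (v2 a b) ↔ max |a| |b| = (n : ℤ) := by
  have hmax : ∀ A B N : ℤ, 0 ≤ N → (max A B = N ↔ (A ≤ N ∧ B ≤ N ∧ (A = N ∨ B = N))) := by
    intros; omega
  rw [onBdry]
  simp only [Fin.forall_fin_two, Fin.exists_fin_two,
    show v2 a b 0 = a from rfl, show v2 a b 1 = b from rfl]
  rw [hmax _ _ _ (by positivity)]
  tauto

noncomputable def QQ (P : PMF ℕ) (nn : ℕ) (t : ℕ) (a b : ℤ) : ℝ≥0∞ := uu P nn t (v2 a b)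

noncomputable def gf (P : PMF ℕ) (s : ℝ≥0∞) : ℝ≥0∞ := ∑' i, P i * s ^ i

lemma QQ_zero (P : PMF ℕ) (nn : ℕ) (a b : ℤ) :
    QQ P nn 0 a b = if max |a| |b| = (nn : ℤ) then 0 else 1 := by
  rw [QQ, uu_zero]
  by_cases h : max |a| |b| = (nn : ℤ)
  · rw [if_pos ((onBdry_v2 nn a b).2 h), if_pos h]
  · rw [if_neg (fun hh => h ((onBdry_v2 nn a b).1 hh)), if_neg h]

lemma QQ_succ (P : PMF ℕ) (nn t : ℕ) (a b : ℤ) :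
    QQ P nn (t+1) a b = if max |a| |b| = (nn : ℤ) then 0 else
      gf P ((4 : ℝ≥0∞)⁻¹ *
        (QQ P nn t (a+1) b + QQ P nn t (a-1) b + QQ P nn t a (b+1) + QQ P nn t a (b-1))) := by
  rw [QQ, uu_succ _ _ _ _ (nbrs_nonempty a b), card_nbrs, sum4]
  by_cases h : max |a| |b| = (nn : ℤ)
  · rw [if_pos ((onBdry_v2 nn a b).2 h), if_pos h, zero_mul]
  · rw [if_neg (fun hh => h ((onBdry_v2 nn a b).1 hh)), if_neg h, one_mul, gf]
    norm_num
    rfl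

lemma QQ_le_one (P : PMF ℕ) (nn t : ℕ) (a b : ℤ) : QQ P nn t a b ≤ 1 :=
  survProb_le_one _ _ _ _

end Aux3

section Aux4
open Topology
set_option maxHeartbeats 1000000
attribute [local instance] Classical.propDecidable
variable (P : PMF ℕ) (nn : ℕ)

lemma gf_mono {s s' : ℝ≥0∞} (h : s ≤ s') : gf P s ≤ gf P s' :=
  ENNReal.tsum_le_tsum fun i => mul_le_mul_right (pow_le_pow_left' h i) _

lemma gf_one : gf P 1 = 1 := by simp [gf, PMF.tsum_coe]

lemma four_inv_mul : ((4 : ℝ≥0∞))⁻¹ * 4 = 1 :=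
  ENNReal.inv_mul_cancel (by norm_num) (by norm_num)

lemma avg_le_one {x1 x2 x3 x4 : ℝ≥0∞} (h1 : x1 ≤ 1) (h2 : x2 ≤ 1) (h3 : x3 ≤ 1) (h4 : x4 ≤ 1) :
    (4 : ℝ≥0∞)⁻¹ * (x1 + x2 + x3 + x4) ≤ 1 := by
  calc (4 : ℝ≥0∞)⁻¹ * (x1 + x2 + x3 + x4) ≤ 4⁻¹ * (1 + 1 + 1 + 1) := by
        exact mul_le_mul_right (add_le_add (add_le_add (add_le_add h1 h2) h3) h4) _
    _ = 1 := by rw [show (1 + 1 + 1 + 1 : ℝ≥0∞) = 4 from by norm_num, four_inv_mul]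

lemma QQ_anti_succ : ∀ t a b, QQ P nn (t+1) a b ≤ QQ P nn t a b := by
  intro t
  induction t with
  | zero =>
    intro a b
    rw [QQ_succ P nn 0 a b, QQ_zero P nn a b]
    by_cases h : max |a| |b| = (nn : ℤ)
    · rw [if_pos h, if_pos h]
    · rw [if_neg h, if_neg h]
      refine le_trans (gf_mono P (avg_le_one (QQ_le_one P nn 0 _ _) (QQ_le_one P nn 0 _ _)
        (QQ_le_one P nn 0 _ _) (QQ_le_one P nn 0 _ _))) (le_of_eq (gf_one P))
  | succ t ih =>
    intro a b
    rw [QQ_succ P nn (t+1) a b, QQ_succ P nn t a b]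
    by_cases h : max |a| |b| = (nn : ℤ)
    · rw [if_pos h, if_pos h]
    · rw [if_neg h, if_neg h]
      exact gf_mono P (mul_le_mul_right
        (add_le_add (add_le_add (add_le_add (ih _ _) (ih _ _)) (ih _ _)) (ih _ _)) _)

lemma QQ_anti (a b : ℤ) : Antitone (fun t => QQ P nn t a b) :=
  antitone_nat_of_succ_le fun t => QQ_anti_succ P nn t a b

noncomputable def qq (a b : ℤ) : ℝ≥0∞ := ⨅ t, QQ P nn t a b

lemma qq_le_QQ (t : ℕ) (a b : ℤ) : qq P nn a b ≤ QQ P nn t a b := iInf_le _ t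

lemma qq_le_one (a b : ℤ) : qq P nn a b ≤ 1 :=
  le_trans (qq_le_QQ P nn 0 a b) (QQ_le_one P nn 0 a b)

lemma qq_bdry {a b : ℤ} (h : max |a| |b| = (nn : ℤ)) : qq P nn a b = 0 := by
  refine le_antisymm ?_ zero_le
  refine le_trans (qq_le_QQ P nn 0 a b) ?_
  rw [QQ_zero, if_pos h]

lemma qq_tendsto (a b : ℤ) :
    Tendsto (fun t => QQ P nn t a b) atTop (𝓝 (qq P nn a b)) :=
  tendsto_atTop_iInf (QQ_anti P nn a b)

lemma qq_le_step {a b : ℤ} (h : max |a| |b| ≠ (nn : ℤ)) :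
    qq P nn a b ≤ gf P ((4 : ℝ≥0∞)⁻¹ *
      (qq P nn (a+1) b + qq P nn (a-1) b + qq P nn a (b+1) + qq P nn a (b-1))) := by
  set A : ℕ → ℝ≥0∞ := fun t => (4 : ℝ≥0∞)⁻¹ *
    (QQ P nn t (a+1) b + QQ P nn t (a-1) b + QQ P nn t a (b+1) + QQ P nn t a (b-1)) with hA
  set Ainf : ℝ≥0∞ := (4 : ℝ≥0∞)⁻¹ *
    (qq P nn (a+1) b + qq P nn (a-1) b + qq P nn a (b+1) + qq P nn a (b-1)) with hAinf
  have hAlim : Tendsto A atTop (𝓝 Ainf) := by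
    refine ENNReal.Tendsto.const_mul ?_ (Or.inr (by norm_num))
    exact (((qq_tendsto P nn (a+1) b).add (qq_tendsto P nn (a-1) b)).add
      (qq_tendsto P nn a (b+1))).add (qq_tendsto P nn a (b-1))
  have hL : ∀ t, qq P nn a b ≤ gf P (A t) := by
    intro t
    refine le_trans (qq_le_QQ P nn (t+1) a b) ?_
    rw [QQ_succ, if_neg h]
  have hCne : ∀ m : ℕ, (∑ i ∈ Finset.range m, P i) ≠ ⊤ := by
    intro m
    have hle : (∑ i ∈ Finset.range m, P i) ≤ 1 := by
      rw [← PMF.tsum_coe P]; exact ENNReal.sum_le_tsum _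
    exact ne_top_of_le_ne_top ENNReal.one_ne_top hle
  have htail : ∀ m : ℕ, (∑' i : ℕ, P (i + m)) = 1 - ∑ i ∈ Finset.range m, P i := by
    intro m
    have hsum : (∑ i ∈ Finset.range m, P i) + (∑' i : ℕ, P (i + m)) = 1 := by
      rw [Summable.sum_add_tsum_nat_add' (k := m) ENNReal.summable, PMF.tsum_coe]
    exact ENNReal.eq_sub_of_add_eq (hCne m) (by rw [add_comm]; exact hsum)
  have hsplit : ∀ m t, gf P (A t) ≤ (∑ i ∈ Finset.range m, P i * A t ^ i)
      + (1 - ∑ i ∈ Finset.range m, P i) := by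
    intro m t
    rw [gf, ← Summable.sum_add_tsum_nat_add' (k := m) ENNReal.summable]
    refine add_le_add_right ?_ _
    refine le_trans (ENNReal.tsum_le_tsum fun i => ?_) (le_of_eq (htail m))
    calc P (i + m) * A t ^ (i + m) ≤ P (i + m) * 1 := by
          refine mul_le_mul_right (pow_le_one' ?_ _) _
          rw [hA]
          exact avg_le_one (QQ_le_one P nn t _ _) (QQ_le_one P nn t _ _)
            (QQ_le_one P nn t _ _) (QQ_le_one P nn t _ _)
      _ = P (i + m) := mul_one _
  have step1 : ∀ m : ℕ, qq P nn a b ≤ (∑ i ∈ Finset.range m, P i * Ainf ^ i)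
      + (1 - ∑ i ∈ Finset.range m, P i) := by
    intro m
    refine ge_of_tendsto' (x := (atTop : Filter ℕ)) ?_ (fun t => le_trans (hL t) (hsplit m t))
    refine Tendsto.add ?_ tendsto_const_nhds
    refine tendsto_finset_sum _ fun i _ => ?_
    exact ENNReal.Tendsto.const_mul (ENNReal.Tendsto.pow hAlim)
      (Or.inr (ne_top_of_le_ne_top ENNReal.one_ne_top (PMF.coe_le_one P i)))
  have final : Tendsto (fun m => (∑ i ∈ Finset.range m, P i * Ainf ^ i)
      + (1 - ∑ i ∈ Finset.range m, P i)) atTop (𝓝 (gf P Ainf + (1 - 1))) := by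
    refine Tendsto.add (ENNReal.tendsto_nat_tsum _) ?_
    have h2 : Tendsto (fun m => ∑ i ∈ Finset.range m, P i) atTop (𝓝 1) := by
      have := ENNReal.tendsto_nat_tsum (fun i => P i)
      rwa [PMF.tsum_coe] at this
    exact ENNReal.Tendsto.sub tendsto_const_nhds h2 (Or.inl ENNReal.one_ne_top)
  have : qq P nn a b ≤ gf P Ainf + (1 - 1) := ge_of_tendsto' final step1
  simpa using this

lemma abs_max' (a : ℤ) : |a| = max a (-a) := rfl

lemma subsolution_le (v : ℤ → ℤ → ℝ≥0∞)
    (h0 : ∀ a b, max |a| |b| = (nn : ℤ) → v a b = 0)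
    (h1 : ∀ a b, v a b ≤ 1)
    (hsub : ∀ a b, max |a| |b| ≠ (nn : ℤ) →
      v a b ≤ gf P ((4 : ℝ≥0∞)⁻¹ * (v (a+1) b + v (a-1) b + v a (b+1) + v a (b-1)))) :
    ∀ a b, v a b ≤ qq P nn a b := by
  have hQ : ∀ t a b, v a b ≤ QQ P nn t a b := by
    intro t
    induction t with
    | zero =>
      intro a b
      rw [QQ_zero]
      by_cases h : max |a| |b| = (nn : ℤ)
      · rw [if_pos h]; exact le_of_eq (h0 a b h)
      · rw [if_neg h]; exact h1 a b
    | succ t ih =>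
      intro a b
      rw [QQ_succ]
      by_cases h : max |a| |b| = (nn : ℤ)
      · rw [if_pos h]; exact le_of_eq (h0 a b h)
      · rw [if_neg h]
        exact le_trans (hsub a b h) (gf_mono P (mul_le_mul_right
          (add_le_add (add_le_add (add_le_add (ih _ _) (ih _ _)) (ih _ _)) (ih _ _)) _))
  exact fun a b => le_iInf fun t => hQ t a b

noncomputable def vfold (P : PMF ℕ) (nn : ℕ) (ra rb : ℤ → ℤ → ℤ) (D : ℤ → ℤ → Prop)
    (a b : ℤ) : ℝ≥0∞ :=
  if D a b then max (qq P nn a b) (qq P nn (ra a b) (rb a b)) else qq P nn a b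

lemma vfold_ge (ra rb : ℤ → ℤ → ℤ) (D : ℤ → ℤ → Prop) (a b : ℤ) :
    qq P nn a b ≤ vfold P nn ra rb D a b := by
  rw [vfold]
  by_cases h : D a b
  · rw [if_pos h]; exact le_max_left _ _
  · rw [if_neg h]

lemma vfold_ge_r (ra rb : ℤ → ℤ → ℤ) (D : ℤ → ℤ → Prop) (a b : ℤ) (h : D a b) :
    qq P nn (ra a b) (rb a b) ≤ vfold P nn ra rb D a b := by
  rw [vfold, if_pos h]; exact le_max_right _ _

lemma reflect_le (ra rb : ℤ → ℤ → ℤ) (D : ℤ → ℤ → Prop)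
    (hO3 : ∀ a b, D a b → max |ra a b| |rb a b| ≤ (nn : ℤ))
    (hO1 : ∀ a b, D a b → max |ra a b| |rb a b| < (nn : ℤ) → max |a| |b| < (nn : ℤ))
    (hnbr : ∀ a b : ℤ, qq P nn (ra a b + 1) (rb a b) + qq P nn (ra a b - 1) (rb a b)
        + qq P nn (ra a b) (rb a b + 1) + qq P nn (ra a b) (rb a b - 1)
      = qq P nn (ra (a+1) b) (rb (a+1) b) + qq P nn (ra (a-1) b) (rb (a-1) b)
        + qq P nn (ra a (b+1)) (rb a (b+1)) + qq P nn (ra a (b-1)) (rb a (b-1)))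
    (hD : ∀ a b, D a b → ¬(ra a b = a ∧ rb a b = b) → max |ra a b| |rb a b| < (nn : ℤ) →
      ∀ a' b', ((a' = a + 1 ∨ a' = a - 1) ∧ b' = b) ∨ (a' = a ∧ (b' = b + 1 ∨ b' = b - 1)) →
      (D a' b' ∨ (ra a' b' = a' ∧ rb a' b' = b'))) :
    ∀ a b, D a b → qq P nn (ra a b) (rb a b) ≤ qq P nn a b := by
  have h0 : ∀ a b, max |a| |b| = (nn : ℤ) → vfold P nn ra rb D a b = 0 := by
    intro a b hb
    rw [vfold]
    by_cases hDab : D a b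
    · rw [if_pos hDab]
      have hq1 : qq P nn a b = 0 := qq_bdry P nn hb
      have hq2 : qq P nn (ra a b) (rb a b) = 0 := by
        refine qq_bdry P nn ?_
        rcases (hO3 a b hDab).lt_or_eq with hlt | heq
        · exact absurd (hO1 a b hDab hlt) (by omega)
        · exact heq
      rw [hq1, hq2, max_self]
    · rw [if_neg hDab]; exact qq_bdry P nn hb
  have h1 : ∀ a b, vfold P nn ra rb D a b ≤ 1 := by
    intro a b
    rw [vfold]
    by_cases hDab : D a b
    · rw [if_pos hDab]; exact max_le (qq_le_one P nn a b) (qq_le_one P nn _ _)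
    · rw [if_neg hDab]; exact qq_le_one P nn a b
  have hstep : ∀ a b, max |a| |b| ≠ (nn : ℤ) → qq P nn a b ≤
      gf P ((4 : ℝ≥0∞)⁻¹ * (vfold P nn ra rb D (a+1) b + vfold P nn ra rb D (a-1) b
        + vfold P nn ra rb D a (b+1) + vfold P nn ra rb D a (b-1))) := by
    intro a b hnb
    refine le_trans (qq_le_step P nn hnb) (gf_mono P (mul_le_mul_right
      (add_le_add (add_le_add (add_le_add (vfold_ge P nn ra rb D _ _) (vfold_ge P nn ra rb D _ _))
        (vfold_ge P nn ra rb D _ _)) (vfold_ge P nn ra rb D _ _)) _))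
  have hsub : ∀ a b, max |a| |b| ≠ (nn : ℤ) →
      vfold P nn ra rb D a b ≤ gf P ((4 : ℝ≥0∞)⁻¹ * (vfold P nn ra rb D (a+1) b
        + vfold P nn ra rb D (a-1) b + vfold P nn ra rb D a (b+1)
        + vfold P nn ra rb D a (b-1))) := by
    intro a b hnb
    rw [vfold]
    by_cases hDab : D a b
    swap
    · rw [if_neg hDab]; exact hstep a b hnb
    rw [if_pos hDab]
    refine max_le (hstep a b hnb) ?_
    by_cases hfix : ra a b = a ∧ rb a b = b
    · rw [hfix.1, hfix.2]; exact hstep a b hnb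
    rcases (hO3 a b hDab).lt_or_eq with hlt | heq
    swap
    · rw [qq_bdry P nn heq]; exact zero_le
    have hne : max |ra a b| |rb a b| ≠ (nn : ℤ) := ne_of_lt hlt
    refine le_trans (qq_le_step P nn hne) ?_
    refine gf_mono P (mul_le_mul_right ?_ _)
    rw [hnbr a b]
    have hmem := hD a b hDab hfix hlt
    have e1 : qq P nn (ra (a+1) b) (rb (a+1) b) ≤ vfold P nn ra rb D (a+1) b := by
      rcases hmem (a+1) b (Or.inl ⟨Or.inl rfl, rfl⟩) with h | h
      · exact vfold_ge_r P nn ra rb D _ _ h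
      · rw [h.1, h.2]; exact vfold_ge P nn ra rb D _ _
    have e2 : qq P nn (ra (a-1) b) (rb (a-1) b) ≤ vfold P nn ra rb D (a-1) b := by
      rcases hmem (a-1) b (Or.inl ⟨Or.inr rfl, rfl⟩) with h | h
      · exact vfold_ge_r P nn ra rb D _ _ h
      · rw [h.1, h.2]; exact vfold_ge P nn ra rb D _ _
    have e3 : qq P nn (ra a (b+1)) (rb a (b+1)) ≤ vfold P nn ra rb D a (b+1) := by
      rcases hmem a (b+1) (Or.inr ⟨rfl, Or.inl rfl⟩) with h | h
      · exact vfold_ge_r P nn ra rb D _ _ h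
      · rw [h.1, h.2]; exact vfold_ge P nn ra rb D _ _
    have e4 : qq P nn (ra a (b-1)) (rb a (b-1)) ≤ vfold P nn ra rb D a (b-1) := by
      rcases hmem a (b-1) (Or.inr ⟨rfl, Or.inr rfl⟩) with h | h
      · exact vfold_ge_r P nn ra rb D _ _ h
      · rw [h.1, h.2]; exact vfold_ge P nn ra rb D _ _
    exact add_le_add (add_le_add (add_le_add e1 e2) e3) e4
  intro a b hDab
  exact le_trans (vfold_ge_r P nn ra rb D a b hDab)
    (subsolution_le P nn _ h0 h1 hsub a b)

lemma mirror1 (hn : 2 ≤ nn) : qq P nn 2 0 ≤ qq P nn 0 0 := by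
  have h := reflect_le P nn (fun a b => 2 - a) (fun a b => b)
      (fun a b => a ≤ 1 ∧ 2 - a ≤ (nn : ℤ) ∧ |b| ≤ (nn : ℤ))
      (by intro a b hD; simp only [abs_max', and_true, true_and] at *; omega)
      (by intro a b hD hlt; simp only [abs_max', and_true, true_and] at *; omega)
      (by intro a b
          rw [show (2 - a + 1 : ℤ) = 2 - (a - 1) from by ring,
            show (2 - a - 1 : ℤ) = 2 - (a + 1) from by ring]
          ring)
      (by intro a b hD hfix hlt a' b' hnb; simp only [abs_max', and_true, true_and] at *; omega)
      0 0 ⟨by omega, by omega, by simp only [abs_max', and_true, true_and]; omega⟩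
  norm_num at h
  exact h

lemma mirror2 (hn : 2 ≤ nn) : qq P nn 1 1 ≤ qq P nn 0 0 := by
  have h := reflect_le P nn (fun a b => 1 - b) (fun a b => 1 - a)
      (fun a b => a + b ≤ 1 ∧ |1 - b| ≤ (nn : ℤ) ∧ |1 - a| ≤ (nn : ℤ))
      (by intro a b hD; simp only [abs_max', and_true, true_and] at *; omega)
      (by intro a b hD hlt; simp only [abs_max', and_true, true_and] at *; omega)
      (by intro a b
          rw [show (1 - b + 1 : ℤ) = 1 - (b - 1) from by ring,
            show (1 - b - 1 : ℤ) = 1 - (b + 1) from by ring,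
            show (1 - a + 1 : ℤ) = 1 - (a - 1) from by ring,
            show (1 - a - 1 : ℤ) = 1 - (a + 1) from by ring]
          ring)
      (by intro a b hD hfix hlt a' b' hnb; simp only [abs_max', and_true, true_and] at *; omega)
      0 0 ⟨by omega, by simp only [abs_max', and_true, true_and]; omega, by simp only [abs_max', and_true, true_and]; omega⟩
  norm_num at h
  exact h

lemma mirror3 (hn : 2 ≤ nn) : qq P nn 1 (-1) ≤ qq P nn 0 0 := by
  have h := reflect_le P nn (fun a b => 1 + b) (fun a b => a - 1)
      (fun a b => a - b ≤ 1 ∧ |1 + b| ≤ (nn : ℤ) ∧ |a - 1| ≤ (nn : ℤ))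
      (by intro a b hD; simp only [abs_max', and_true, true_and] at *; omega)
      (by intro a b hD hlt; simp only [abs_max', and_true, true_and] at *; omega)
      (by intro a b
          rw [show (1 + b + 1 : ℤ) = 1 + (b + 1) from by ring,
            show (1 + b - 1 : ℤ) = 1 + (b - 1) from by ring,
            show (a - 1 + 1 : ℤ) = a + 1 - 1 from by ring]
          ring)
      (by intro a b hD hfix hlt a' b' hnb; simp only [abs_max', and_true, true_and] at *; omega)
      0 0 ⟨by omega, by simp only [abs_max', and_true, true_and]; omega, by simp only [abs_max', and_true, true_and]; omega⟩
  norm_num at h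
  exact h

end Aux4

end BRW

namespace BRW

/-- For the periodic nearest-neighbors branching random walk on `ℤ²` with
offspring distribution `P`, letting `q_n(x) = 1 - p_n(x)`, for every `n ≥ 2` we have
`q_n(1,0) ≤ Σ_{i≥0} q_n(0,0)^i P_i`. -/
theorem periodic_noEscape_generating_inequality (P : PMF ℕ) (n : ℕ) (hn : 2 ≤ n) :
    1 - hitProb (periodicStep P) (Finsupp.single ![1, 0] 1) n
      ≤ ∑' i : ℕ, (1 - hitProb (periodicStep P) (Finsupp.single ![0, 0] 1) n) ^ i * P i := by

  classical
  have hsub : ∀ (a b : ℤ),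
      1 - hitProb (periodicStep P) (Finsupp.single (v2 a b) 1) n = qq P n a b := by
    intro a b
    rw [hitProb]
    have hle : (⨅ t, survProb (periodicStep P) (Finsupp.single (v2 a b) 1) n t) ≤ 1 :=
      le_trans (iInf_le _ 0) (survProb_le_one _ _ _ _)
    rw [ENNReal.sub_sub_cancel ENNReal.one_ne_top hle]
    rfl
  rw [show (![1, 0] : Site 2) = v2 1 0 from rfl, show (![0, 0] : Site 2) = v2 0 0 from rfl,
    hsub 1 0, hsub 0 0]
  have h10 : max |(1 : ℤ)| |(0 : ℤ)| ≠ (n : ℤ) := by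
    simp only [abs_max', and_true, true_and]; omega
  have hkey := qq_le_step P n h10
  rw [show ((1 : ℤ) + 1) = 2 from by norm_num, show ((1 : ℤ) - 1) = 0 from by norm_num,
    show ((0 : ℤ) + 1) = 1 from by norm_num, show ((0 : ℤ) - 1) = -1 from by norm_num] at hkey
  refine le_trans hkey ?_
  have havg : (4 : ℝ≥0∞)⁻¹ * (qq P n 2 0 + qq P n 0 0 + qq P n 1 1 + qq P n 1 (-1))
      ≤ qq P n 0 0 := by
    calc (4 : ℝ≥0∞)⁻¹ * (qq P n 2 0 + qq P n 0 0 + qq P n 1 1 + qq P n 1 (-1))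
        ≤ 4⁻¹ * (qq P n 0 0 + qq P n 0 0 + qq P n 0 0 + qq P n 0 0) :=
          mul_le_mul_right (add_le_add (add_le_add (add_le_add (mirror1 P n hn) le_rfl)
            (mirror2 P n hn)) (mirror3 P n hn)) _
      _ = qq P n 0 0 := by
          rw [show qq P n 0 0 + qq P n 0 0 + qq P n 0 0 + qq P n 0 0
              = 4 * qq P n 0 0 from by ring, ← mul_assoc, four_inv_mul, one_mul]
  refine le_trans (gf_mono P havg) (le_of_eq ?_)
  rw [gf]
  exact tsum_congr fun i => mul_comm _ _


end BRW
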